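/- With the same setup, for C sufficiently large and all k ≥ 1: if |z| = r_k then |f(z)| ≥ a_{k+1}/(32e(k+1)) > 10·a_k. -/

import Mathlib

open Finset

/-- Auxiliary: `∏ (1 - xᵢ) ≥ 1 - ∑ xᵢ` for `xᵢ ∈ [0,1]`. -/
lemma aux_prod_one_sub (s : Finset ℕ) (x : ℕ → ℝ) (h0 : ∀ i ∈ s, 0 ≤ x i)
    (h1 : ∀ i ∈ s, x i ≤ 1) : 1 - ∑ i ∈ s, x i ≤ ∏ i ∈ s, (1 - x i) := by
  induction s using Finset.cons_induction with
  | empty => simp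
  | cons a s ha ih =>
    rw [Finset.prod_cons, Finset.sum_cons]
    have hxa0 : 0 ≤ x a := h0 a (Finset.mem_cons_self a s)
    have hxa1 : x a ≤ 1 := h1 a (Finset.mem_cons_self a s)
    have hs0 : ∀ i ∈ s, 0 ≤ x i := fun i hi => h0 i (Finset.mem_cons.2 (Or.inr hi))
    have hs1 : ∀ i ∈ s, x i ≤ 1 := fun i hi => h1 i (Finset.mem_cons.2 (Or.inr hi))
    have ihs := ih hs0 hs1
    have hsum0 : 0 ≤ ∑ i ∈ s, x i := Finset.sum_nonneg hs0
    have hmul := mul_le_mul_of_nonneg_left ihs (by linarith : (0:ℝ) ≤ 1 - x a)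
    nlinarith [hmul]

set_option maxHeartbeats 8000000 in
/-- With the same setup, for C sufficiently large and all k ≥ 1: if |z| = r_k then
|f(z)| ≥ a_{k+1}/(32e(k+1)) > 10·a_k. -/
theorem stmt7 : ∃ C0 : ℝ, ∀ C : ℝ, C0 ≤ C →
    ∀ a : ℕ → ℝ, (∀ k : ℕ, 1 ≤ k → 0 < a k) → a 1 = 1 →
    (∀ k : ℕ, 1 ≤ k → a (k+1) = 8 * C * a k * ∏ j ∈ Finset.Icc 1 (k-1), (a k / a j)) →
    ∀ f : ℂ → ℂ, (∀ z, f z = C * z * ∏' i : ℕ, (1 - z / (a (i+1) : ℂ))) →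
    ∀ k : ℕ, 1 ≤ k → ∀ z : ℂ,
      ‖z‖ = (2 * (k : ℝ) + 1) / (2 * (k : ℝ) + 2) * a k →
      a (k+1) / (32 * Real.exp 1 * ((k : ℝ) + 1)) ≤ ‖f z‖ ∧
      10 * a k < a (k+1) / (32 * Real.exp 1 * ((k : ℝ) + 1)) := by
  use 1000
  intro C hC a hpos ha1 hrec f hf k hk z hz
  have hC0 : (0:ℝ) < C := by linarith
  have h8C1 : (1:ℝ) ≤ 8 * C := by linarith
  have h8C0 : (0:ℝ) < 8 * C := by linarith
  have one_le_prod : ∀ (s : Finset ℕ) (g : ℕ → ℝ), (∀ i ∈ s, 1 ≤ g i) → 1 ≤ ∏ i ∈ s, g i := by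
    intro s g hg
    calc (1:ℝ) = ∏ _i ∈ s, 1 := by simp
      _ ≤ ∏ i ∈ s, g i := Finset.prod_le_prod (by intros; norm_num) hg
  -- monotonicity
  have hmono : ∀ j i : ℕ, 1 ≤ i → i ≤ j → a i ≤ a j := by
    intro j
    induction j with
    | zero => intro i h1 h2; omega
    | succ n ih =>
      intro i h1 h2
      rcases Nat.lt_or_ge i (n+1) with h | h
      · have hin : i ≤ n := by omega
        have h1n : 1 ≤ n := by omega
        refine (ih i h1 hin).trans ?_
        rw [hrec n h1n]
        have hQ : 1 ≤ ∏ j ∈ Finset.Icc 1 (n-1), (a n / a j) := by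
          apply one_le_prod
          intro j hj
          rw [Finset.mem_Icc] at hj
          rw [le_div_iff₀ (hpos j hj.1), one_mul]
          exact ih j hj.1 (by omega)
        have h1 : 0 < a n := hpos n h1n
        nlinarith [mul_le_mul_of_nonneg_left hQ (le_of_lt (mul_pos h8C0 h1))]
      · have : i = n + 1 := by omega
        subst this; exact le_refl _
  -- growth step
  have hstep : ∀ j : ℕ, 1 ≤ j → 8 * C * a j ≤ a (j+1) := by
    intro j hj
    rw [hrec j hj]
    have hQ : 1 ≤ ∏ i ∈ Finset.Icc 1 (j-1), (a j / a i) := by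
      apply one_le_prod
      intro i hi
      rw [Finset.mem_Icc] at hi
      rw [le_div_iff₀ (hpos i hi.1), one_mul]
      exact hmono j i hi.1 (by omega)
    have h1 : 0 < a j := hpos j hj
    nlinarith [mul_le_mul_of_nonneg_left hQ (le_of_lt (mul_pos h8C0 h1))]
  -- iterated growth
  have hgrow : ∀ j : ℕ, 1 ≤ j → ∀ n : ℕ, (8*C)^n * a j ≤ a (j + n) := by
    intro j hj n
    induction n with
    | zero => simp
    | succ n ih =>
      have h1 : 8 * C * a (j+n) ≤ a (j+n+1) := hstep (j+n) (by omega)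
      have h2 : 0 < a (j + n) := hpos _ (by omega)
      calc (8*C)^(n+1) * a j = 8*C*((8*C)^n * a j) := by ring
        _ ≤ 8*C*a (j+n) := by nlinarith [ih]
        _ ≤ a (j + (n+1)) := by rw [← Nat.add_assoc]; exact h1
  obtain ⟨m, rfl⟩ : ∃ m, k = m + 1 := ⟨k - 1, by omega⟩
  clear hk
  set M : ℝ := (m : ℝ) with hM_def
  have hM : 0 ≤ M := Nat.cast_nonneg m
  set r : ℝ := (2*M+3)/(2*M+4) with hr_def
  have hden : (0:ℝ) < 2*M+4 := by linarith
  have hr34 : (3/4 : ℝ) ≤ r := by rw [hr_def, le_div_iff₀ hden]; linarith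
  have hr1 : r < 1 := by rw [hr_def, div_lt_one hden]; linarith
  have hr0 : (0:ℝ) < r := by linarith
  have hzabs : ‖z‖ = r * a (m+1) := by
    rw [hz, hr_def, hM_def]; push_cast; ring_nf
  have hA : 0 < a (m+1) := hpos _ (by omega)
  have hA2 : 0 < a (m+2) := hpos _ (by omega)
  set Q : ℝ := ∏ j ∈ Finset.Icc 1 m, (a (m+1) / a j) with hQ_def
  have hQ1 : (1:ℝ) ≤ Q := by
    rw [hQ_def]
    apply one_le_prod
    intro j hj
    rw [Finset.mem_Icc] at hj
    rw [le_div_iff₀ (hpos j hj.1), one_mul]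
    exact hmono (m+1) j hj.1 (by omega)
  have hQ0 : (0:ℝ) < Q := by linarith
  have harec : a (m+2) = 8 * C * a (m+1) * Q := by
    have h := hrec (m+1) (by omega)
    rw [Nat.add_sub_cancel] at h
    rw [hQ_def]
    exact h
  have hQC : (8*C)^m ≤ Q := by
    rw [hQ_def]
    calc (8*C)^m = ∏ _j ∈ Finset.Icc 1 m, (8*C) := by
          rw [Finset.prod_const, Nat.card_Icc]; norm_num
      _ ≤ ∏ j ∈ Finset.Icc 1 m, (a (m+1) / a j) := by
          apply Finset.prod_le_prod (fun i _ => le_of_lt h8C0)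
          intro j hj
          rw [Finset.mem_Icc] at hj
          rw [le_div_iff₀ (hpos j hj.1)]
          have hm1 : 1 ≤ m := le_trans hj.1 hj.2
          have h1 : a j ≤ a m := hmono m j hj.1 hj.2
          have h2 : 8*C*a m ≤ a (m+1) := hstep m hm1
          nlinarith [hpos j hj.1]
  have hE3 : Real.exp 1 < 3 := by
    have := Real.exp_one_lt_d9; norm_num at this ⊢; linarith
  have hE27 : (2.7:ℝ) < Real.exp 1 := by
    have := Real.exp_one_gt_d9; norm_num at this ⊢; linarith
  have hE0 : (0:ℝ) < Real.exp 1 := Real.exp_pos 1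
  -- Part 2
  have part2 : 10 * a (m+1) < a (m+1+1) / (32 * Real.exp 1 * (((m+1:ℕ) : ℝ) + 1)) := by
    have hpow1 : (M+2) ≤ 2^(m+1) := by
      have h := Nat.lt_two_pow_self (n := m+1)
      have h2 : ((m+2 : ℕ) : ℝ) ≤ ((2^(m+1) : ℕ) : ℝ) := by exact_mod_cast h
      push_cast at h2
      rw [hM_def]; push_cast; linarith
    have hpow2 : (2:ℝ)^(m+1) * 4000 ≤ 8000^(m+1) := by
      have h1 : (8000:ℝ)^(m+1) = 2^(m+1) * 4000^(m+1) := by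
        rw [← mul_pow]; norm_num
      rw [h1]
      have h2 : (4000:ℝ) ≤ 4000^(m+1) := by
        calc (4000:ℝ) = 4000^1 := (pow_one _).symm
          _ ≤ 4000^(m+1) := pow_le_pow_right₀ (by norm_num) (by omega)
      nlinarith [pow_pos (by norm_num : (0:ℝ) < 2) (m+1)]
    have hpow3 : (8000:ℝ)^(m+1) ≤ (8*C)^(m+1) :=
      pow_le_pow_left₀ (by norm_num) (by linarith) _
    have hQC1 : (8*C)^(m+1) * a (m+1) ≤ a (m+2) := by
      rw [harec]
      have hp : 0 < 8*C*a (m+1) := mul_pos h8C0 hA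
      calc (8*C)^(m+1) * a (m+1) = 8*C*a (m+1)*(8*C)^m := by ring
        _ ≤ 8*C*a (m+1)*Q := by nlinarith [hQC]
    have hd : 0 < 32 * Real.exp 1 * (((m+1:ℕ) : ℝ) + 1) := by positivity
    rw [lt_div_iff₀ hd]
    have hcast : (((m+1:ℕ) : ℝ) + 1) = M + 2 := by rw [hM_def]; push_cast; ring
    rw [hcast]
    have e1 : 10 * a (m+1) * (32*Real.exp 1*(M+2)) < 960*((M+2)*a (m+1)) := by
      nlinarith [hE3, hA, hM, mul_pos (show (0:ℝ) < M+2 by linarith) hA]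
    have e3 : (4000:ℝ)*(M+2) ≤ (8*C)^(m+1) := by
      have h4 : (4000:ℝ)*(M+2) ≤ 4000*2^(m+1) := by
        nlinarith [hpow1]
      nlinarith [hpow2, hpow3]
    have e4 : 4000*((M+2)*a (m+1)) ≤ a (m+2) := by
      calc 4000*((M+2)*a (m+1)) = (4000*(M+2))*a (m+1) := by ring
        _ ≤ (8*C)^(m+1) * a (m+1) := by nlinarith [e3, hA]
        _ ≤ a (m+2) := hQC1
    have e5 : 960*((M+2)*a (m+1)) ≤ 4000*((M+2)*a (m+1)) := by
      nlinarith [hA, hM, mul_pos (show (0:ℝ) < M+2 by linarith) hA]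
    calc 10 * a (m+1) * (32*Real.exp 1*(M+2)) < 960*((M+2)*a (m+1)) := e1
      _ ≤ a (m+2) := le_trans e5 e4
  refine ⟨?_, part2⟩
  -- Part 1
  set g : ℕ → ℂ := fun i => 1 - z / (a (i+1) : ℂ) with hg_def
  set u : ℕ → ℝ := fun i => ‖z‖ / a (i+1) with hu_def
  have hu_nonneg : ∀ i, 0 ≤ u i := by
    intro i; rw [hu_def]
    exact div_nonneg (norm_nonneg z) (le_of_lt (hpos (i+1) (by omega)))
  have hu_eq : ∀ i, ‖z / (a (i+1) : ℂ)‖ = u i := by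
    intro i
    rw [hu_def, norm_div, Complex.norm_real, Real.norm_eq_abs, abs_of_pos (hpos (i+1) (by omega))]
  have hg_lb1 : ∀ i, 1 - u i ≤ ‖g i‖ := by
    intro i
    have h := norm_sub_norm_le (1:ℂ) (z / (a (i+1) : ℂ))
    rw [hu_eq i, norm_one] at h
    exact h
  have hg_lb2 : ∀ i, u i - 1 ≤ ‖g i‖ := by
    intro i
    have h := norm_sub_norm_le (z / (a (i+1) : ℂ)) 1
    rw [hu_eq i, norm_one, ← norm_neg, neg_sub] at h
    exact h
  have hum : u m = r := by
    simp only [hu_def]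
    rw [hzabs, mul_div_assoc, div_self hA.ne', mul_one]
  have hu_tail : ∀ n : ℕ, u (m+1+n) ≤ (1/(8*C))^(n+1) := by
    intro n
    have hg1 := hgrow (m+1) (by omega) (n+1)
    have hidx : m+1+(n+1) = (m+1+n)+1 := by omega
    rw [hidx] at hg1
    have hApos : 0 < a ((m+1+n)+1) := hpos _ (by omega)
    have hzle : ‖z‖ ≤ a (m+1) := by
      rw [hzabs]
      have h := mul_le_mul_of_nonneg_right hr1.le hA.le
      linarith only [h]
    have hp : (0:ℝ) < (8*C)^(n+1) := pow_pos h8C0 _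
    rw [hu_def]
    rw [div_pow, one_pow, div_le_div_iff₀ hApos hp]
    have h2 := mul_le_mul_of_nonneg_right hzle (le_of_lt hp)
    linarith only [h2, hg1]
  have hsmall : ∀ n : ℕ, ((1:ℝ)/(8*C))^(n+1) ≤ 1/8 := by
    intro n
    have h1 : ((1:ℝ)/(8*C))^(n+1) ≤ (1/8:ℝ)^(n+1) := by
      apply pow_le_pow_left₀ (by positivity)
      rw [div_le_div_iff₀ h8C0 (by norm_num)]; linarith
    have h2 : ((1:ℝ)/8)^(n+1) ≤ (1/8:ℝ)^1 :=
      pow_le_pow_of_le_one (by norm_num) (by norm_num) (by omega)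
    rw [pow_one] at h2
    linarith
  have hgne : ∀ i, g i ≠ 0 := by
    intro i hgi
    rw [hg_def] at hgi
    have hane : ((a (i+1):ℝ):ℂ) ≠ 0 := by
      exact_mod_cast (hpos (i+1) (by omega)).ne'
    have h1 : (1:ℂ) = z / (a (i+1):ℂ) := sub_eq_zero.mp hgi
    have hz_eq : z = ((a (i+1):ℝ):ℂ) := by
      field_simp at h1; exact h1.symm
    have habs : ‖z‖ = a (i+1) := by
      rw [hz_eq, Complex.norm_real, Real.norm_eq_abs, abs_of_pos (hpos (i+1) (by omega))]
    have hra : a (i+1) = r * a (m+1) := by rw [← habs, hzabs]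
    rcases le_or_gt (i+1) m with h | h
    · have h1' : a (i+1) ≤ a m := hmono m (i+1) (by omega) h
      have h2' : 8*C*a m ≤ a (m+1) := hstep m (by omega)
      have hm0 : 0 < a m := hpos m (by omega)
      have hCm : 8000 * a m ≤ 8*C*a m := by
        have := mul_le_mul_of_nonneg_right (show (1000:ℝ) ≤ C from hC) hm0.le
        linarith only [this]
      have hr2 : (3/4)*a (m+1) ≤ r*a (m+1) := mul_le_mul_of_nonneg_right hr34 hA.le
      linarith only [hra, h1', h2', hCm, hr2, hA, hm0]
    · have h1' : a (m+1) ≤ a (i+1) := hmono (i+1) (m+1) (by omega) (by omega)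
      have h2' := mul_le_mul_of_nonneg_right hr1.le hA.le
      have h3' := mul_pos (show (0:ℝ) < 1 - r by linarith only [hr1]) hA
      linarith only [hra, h1', h2', h3']
  -- multipliability
  have hlog : Summable (fun i => Complex.log (g i)) := by
    rw [← summable_nat_add_iff (f := fun i => Complex.log (g i)) (m+1)]
    apply Summable.of_norm
    have hmaj : Summable (fun n : ℕ => 2*(1/8:ℝ)^(n+1)) := by
      have h := (summable_geometric_of_lt_one (by norm_num : (0:ℝ) ≤ 1/8)
        (by norm_num)).mul_left (2*(1/8))
      refine h.congr fun n => ?_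
      rw [pow_succ]; ring
    apply Summable.of_nonneg_of_le (fun n => norm_nonneg _) ?_ hmaj
    intro n
    have hu1 : u (m+1+n) ≤ (1/(8*C))^(n+1) := hu_tail n
    have hu8 : u (m+1+n) ≤ 1/8 := le_trans hu1 (hsmall n)
    have hu0 : 0 ≤ u (m+1+n) := hu_nonneg _
    have hidx : n+(m+1) = m+1+n := by omega
    have hgw : g (n+(m+1)) = 1 + (-(z / (a ((m+1+n)+1) : ℂ))) := by
      rw [hg_def, hidx]; ring
    have hnw : ‖-(z / (a ((m+1+n)+1) : ℂ))‖ = u (m+1+n) := by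
      rw [norm_neg, hu_eq]
    have hlt : ‖-(z / (a ((m+1+n)+1) : ℂ))‖ < 1 := by rw [hnw]; linarith
    have h := Complex.norm_log_one_add_le hlt
    rw [hgw]
    set t : ℝ := ‖-(z / (a ((m+1+n)+1) : ℂ))‖ with ht_def
    have ht0 : 0 ≤ t := norm_nonneg _
    have ht8 : t ≤ 1/8 := by rw [hnw]; exact hu8
    have hinv : (1-t)⁻¹ ≤ 2 := by
      have h2 : (1/2:ℝ) ≤ 1 - t := by linarith
      calc (1-t)⁻¹ ≤ ((1:ℝ)/2)⁻¹ := inv_anti₀ (by norm_num) h2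
        _ = 2 := by norm_num
    have h3 : t^2*(1-t)⁻¹ ≤ t^2*2 := mul_le_mul_of_nonneg_left hinv (sq_nonneg t)
    calc ‖Complex.log (1 + (-(z / (a ((m+1+n)+1) : ℂ))))‖
        ≤ t^2*(1-t)⁻¹/2 + t := h
      _ ≤ 2*t := by
          have h4 : t*t ≤ t*(1/8) := mul_le_mul_of_nonneg_left ht8 ht0
          nlinarith only [h3, h4, ht0]
      _ ≤ 2*(1/8:ℝ)^(n+1) := by
          have : t ≤ (1/(8*C))^(n+1) := by rw [hnw]; exact hu1
          have h4 : ((1:ℝ)/(8*C))^(n+1) ≤ (1/8:ℝ)^(n+1) := by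
            apply pow_le_pow_left₀ (by positivity)
            rw [div_le_div_iff₀ h8C0 (by norm_num)]; linarith
          linarith
  have hmult : Multipliable g :=
    Complex.multipliable_of_summable_log hlog
  set P : ℝ := ‖∏' i, g i‖ with hP_def
  have hProd : HasProd (fun i => ‖g i‖) P := by
    rw [hP_def]
    simpa [hmult.norm_tprod] using hmult.norm.hasProd
  have htend := hProd.tendsto_prod_nat
  -- geometric sum bound
  have hgeo : ∀ (s : Finset ℕ), ∑ i ∈ s, ((1:ℝ)/(8*C))^(i+1) ≤ 1/(4*C) := by
    intro s
    have h8 : (0:ℝ) ≤ 1/(8*C) := by positivity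
    have h81 : ((1:ℝ)/(8*C)) < 1 := by rw [div_lt_one h8C0]; linarith
    have hs : Summable (fun i : ℕ => ((1:ℝ)/(8*C))^(i+1)) := by
      have h := (summable_geometric_of_lt_one h8 h81).mul_right (1/(8*C))
      refine h.congr fun n => ?_
      rw [pow_succ]
    calc ∑ i ∈ s, ((1:ℝ)/(8*C))^(i+1)
        ≤ ∑' i : ℕ, ((1:ℝ)/(8*C))^(i+1) := Summable.sum_le_tsum s (fun i _ => by positivity) hs
      _ = (1/(8*C)) * (1 - 1/(8*C))⁻¹ := by
          simp_rw [pow_succ, mul_comm _ ((1:ℝ)/(8*C))]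
          rw [tsum_mul_left, tsum_geometric_of_lt_one h8 h81]
      _ ≤ 1/(4*C) := by
          have hh : (1 - 1/(8*C))⁻¹ ≤ 2 := by
            have hx : (1:ℝ)/(8*C) ≤ 1/2 := by
              rw [div_le_div_iff₀ h8C0 (by norm_num)]; linarith
            have h2 : (1/2:ℝ) ≤ 1 - 1/(8*C) := by linarith
            calc (1 - 1/(8*C))⁻¹ ≤ ((1:ℝ)/2)⁻¹ := inv_anti₀ (by norm_num) h2
              _ = 2 := by norm_num
          calc (1/(8*C)) * (1-1/(8*C))⁻¹ ≤ (1/(8*C)) * 2 := mul_le_mul_of_nonneg_left hh h8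
            _ = 1/(4*C) := by field_simp; ring
  -- the constant W
  obtain ⟨W, hW_def⟩ : ∃ W : ℝ, W = 1 - 1/(3*C) := ⟨_, rfl⟩
  have hW99 : (99/100:ℝ) ≤ W := by
    rw [hW_def]
    have : (1:ℝ)/(3*C) ≤ 1/100 := by
      rw [div_le_div_iff₀ (by linarith) (by norm_num)]; linarith
    linarith
  have hW1 : W ≤ 1 := by
    rw [hW_def]
    have : (0:ℝ) ≤ 1/(3*C) := by positivity
    linarith
  have hW0 : (0:ℝ) ≤ W := by linarith
  set F : ℝ := ∏ i ∈ Finset.range (m+1), ‖g i‖ with hF_def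
  have hF0 : 0 ≤ F := by
    rw [hF_def]; exact Finset.prod_nonneg fun i _ => norm_nonneg _
  -- tail bound for partial products
  have hkey : ∀ n, m+1 ≤ n → F * W ≤ ∏ i ∈ Finset.range n, ‖g i‖ := by
    intro n hn
    rw [← Finset.prod_range_mul_prod_Ico _ hn, ← hF_def]
    apply mul_le_mul_of_nonneg_left ?_ hF0
    have hub : ∀ i ∈ Finset.Ico (m+1) n, u i ≤ 1/8 := by
      intro i hi; rw [Finset.mem_Ico] at hi
      obtain ⟨p, rfl⟩ : ∃ p, i = m+1+p := ⟨i - (m+1), by omega⟩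
      exact le_trans (hu_tail p) (hsmall p)
    have h1 : ∏ i ∈ Finset.Ico (m+1) n, (1 - u i)
        ≤ ∏ i ∈ Finset.Ico (m+1) n, ‖g i‖ := by
      apply Finset.prod_le_prod
      · intro i hi; have := hub i hi; linarith
      · intro i _; exact hg_lb1 i
    have h3 := aux_prod_one_sub (Finset.Ico (m+1) n) u
      (fun i _ => hu_nonneg i) (fun i hi => by linarith [hub i hi])
    have h4 : ∑ i ∈ Finset.Ico (m+1) n, u i ≤ 1/(4*C) := by
      rw [Finset.sum_Ico_eq_sum_range]
      calc ∑ i ∈ Finset.range (n-(m+1)), u (m+1+i)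
          ≤ ∑ i ∈ Finset.range (n-(m+1)), ((1:ℝ)/(8*C))^(i+1) :=
            Finset.sum_le_sum (fun i _ => hu_tail i)
        _ ≤ 1/(4*C) := hgeo _
    have h5 : W ≤ 1 - 1/(4*C) := by
      rw [hW_def]
      have : (1:ℝ)/(4*C) ≤ 1/(3*C) := by
        rw [div_le_div_iff₀ (by linarith) (by linarith)]; linarith
      linarith
    linarith
  have habsP : F * W ≤ P :=
    ge_of_tendsto htend (Filter.eventually_atTop.2 ⟨m+1, hkey⟩)
  -- the finite part
  have hFsplit : F = (∏ i ∈ Finset.range m, ‖g i‖) * ‖g m‖ := by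
    rw [hF_def, Finset.prod_range_succ]
  have hgm : 1 - r ≤ ‖g m‖ := by
    have := hg_lb1 m; rw [hum] at this; exact this
  -- middle product
  have hmid : Q * (r^m * W) ≤ ∏ i ∈ Finset.range m, ‖g i‖ := by
    have hstep1 : ∀ i ∈ Finset.range m,
        (a (m+1)/a (i+1)) * (r * (1 - (4/3)*((1:ℝ)/(8*C))^(m-i))) ≤ ‖g i‖ := by
      intro i hi; rw [Finset.mem_range] at hi
      have hai : 0 < a (i+1) := hpos _ (by omega)
      have hD := hgrow (i+1) (by omega) (m-i)
      have hidx : i+1+(m-i) = m+1 := by omega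
      rw [hidx] at hD
      have ht0 : (0:ℝ) < ((1:ℝ)/(8*C))^(m-i) := by positivity
      have hDt : 1 ≤ (a (m+1)/a (i+1)) * ((1:ℝ)/(8*C))^(m-i) := by
        rw [div_pow, one_pow, div_mul_div_comm, le_div_iff₀ (by positivity)]
        rw [one_mul, mul_one]
        linarith only [hD]
      have hlb := hg_lb2 i
      have hui : u i = r * a (m+1) / a (i+1) := by rw [hu_def, hzabs]
      rw [hui] at hlb
      have hD0 : 0 < a (m+1) / a (i+1) := by positivity
      have hra : r * a (m+1) / a (i+1) = r * (a (m+1)/a (i+1)) := by ring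
      rw [hra] at hlb
      have h6 : (3/4:ℝ) ≤ (a (m+1)/a (i+1)) * ((1:ℝ)/(8*C))^(m-i) * r := by
        have h14 := mul_le_mul_of_nonneg_right hDt hr0.le
        have h15 := mul_le_mul_of_nonneg_left hr34 (le_of_lt (mul_pos hD0 ht0))
        nlinarith only [h14, h15, hr34, hDt, ht0, hD0]
      nlinarith only [h6, hlb]
    calc Q * (r^m * W)
        ≤ ∏ i ∈ Finset.range m,
            ((a (m+1)/a (i+1)) * (r * (1 - (4/3)*((1:ℝ)/(8*C))^(m-i)))) := by
          have hQeq : ∏ i ∈ Finset.range m, (a (m+1)/a (i+1)) = Q := by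
            rw [hQ_def, ← Finset.Ico_add_one_right_eq_Icc, Finset.prod_Ico_eq_prod_range]
            exact Finset.prod_congr rfl fun i _ => by rw [Nat.add_comm i 1]
          have hrefl : ∏ i ∈ Finset.range m, (1 - (4/3)*((1:ℝ)/(8*C))^(m-i))
              = ∏ i ∈ Finset.range m, (1 - (4/3)*((1:ℝ)/(8*C))^(i+1)) := by
            rw [← Finset.prod_range_reflect]
            apply Finset.prod_congr rfl
            intro i hi; rw [Finset.mem_range] at hi
            have hmi : m - (m-1-i) = i+1 := by omega
            rw [hmi]
          have hlast : W ≤ ∏ i ∈ Finset.range m, (1 - (4/3)*((1:ℝ)/(8*C))^(i+1)) := by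
            have hb1 : ∀ i ∈ Finset.range m, (0:ℝ) ≤ (4/3)*((1:ℝ)/(8*C))^(i+1) := by
              intro i _; positivity
            have hb2 : ∀ i ∈ Finset.range m, (4/3)*((1:ℝ)/(8*C))^(i+1) ≤ 1 := by
              intro i _
              have h12 := hsmall i
              have h13 : (0:ℝ) ≤ ((1:ℝ)/(8*C))^(i+1) := by positivity
              linarith only [h12, h13]
            have h7 := aux_prod_one_sub (Finset.range m)
              (fun i => (4/3)*((1:ℝ)/(8*C))^(i+1)) hb1 hb2
            have hsum : ∑ i ∈ Finset.range m, (4/3)*((1:ℝ)/(8*C))^(i+1) ≤ 1/(3*C) := by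
              rw [← Finset.mul_sum]
              have h8' := hgeo (Finset.range m)
              have h9 : (4/3:ℝ) * ∑ i ∈ Finset.range m, ((1:ℝ)/(8*C))^(i+1)
                  ≤ (4/3) * (1/(4*C)) := by
                apply mul_le_mul_of_nonneg_left h8' (by norm_num)
              have h10 : (4/3:ℝ) * (1/(4*C)) = 1/(3*C) := by
                field_simp
              linarith
            rw [hW_def]; linarith
          rw [Finset.prod_mul_distrib, hQeq, Finset.prod_mul_distrib,
            Finset.prod_const, Finset.card_range, hrefl]
          have h16 := mul_le_mul_of_nonneg_left hlast
            (le_of_lt (mul_pos hQ0 (pow_pos hr0 m)))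
          nlinarith only [h16]
      _ ≤ ∏ i ∈ Finset.range m, ‖g i‖ := by
          apply Finset.prod_le_prod ?_ hstep1
          intro i hi; rw [Finset.mem_range] at hi
          have h11 : ((1:ℝ)/(8*C))^(m-i) ≤ 1/8 := by
            obtain ⟨p, hp⟩ : ∃ p, m - i = p + 1 := ⟨m - i - 1, by omega⟩
            rw [hp]; exact hsmall p
          have : (0:ℝ) < 1 - (4/3)*((1:ℝ)/(8*C))^(m-i) := by nlinarith
          have hD0 : (0:ℝ) < a (m+1) / a (i+1) := by
            have := hpos (i+1) (by omega); positivity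
          exact le_of_lt (mul_pos hD0 (mul_pos hr0 this))
  -- assemble
  have habsf : ‖f z‖ = C * (r * a (m+1)) * P := by
    rw [hf z, norm_mul, norm_mul, Complex.norm_real, Real.norm_eq_abs, abs_of_pos hC0, hzabs, hP_def, hg_def]
  have hF_lb : Q * (r^m * W) * (1 - r) ≤ F := by
    rw [hFsplit]
    apply mul_le_mul hmid hgm (by linarith)
      (Finset.prod_nonneg fun i _ => norm_nonneg _)
  have hP_lb : Q * (r^m * W) * (1 - r) * W ≤ P := by
    have h7 := mul_le_mul_of_nonneg_right hF_lb hW0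
    linarith [habsP]
  have hd : 0 < 32 * Real.exp 1 * (((m+1:ℕ) : ℝ) + 1) := by positivity
  rw [div_le_iff₀ hd, habsf, harec]
  have hcast : (((m+1:ℕ) : ℝ) + 1) = M + 2 := by rw [hM_def]; push_cast; ring
  rw [hcast]
  have hrm1 : (1/2:ℝ) ≤ r^(m+1) := by
    have h9 : (1:ℝ)/(2*M+4) ≤ 1 := by rw [div_le_one hden]; linarith
    have hx : (-2:ℝ) ≤ -(1/(2*M+4)) := by linarith
    have hb := one_add_mul_le_pow hx (m+1)
    have hr_eq : 1 + (-(1/(2*M+4))) = r := by rw [hr_def]; field_simp; ring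
    rw [hr_eq] at hb
    have hcast2 : ((m+1:ℕ):ℝ) = M+1 := by rw [hM_def]; push_cast; ring
    rw [hcast2] at hb
    have h10 : (M+1)/(2*M+4) ≤ 1/2 := by
      rw [div_le_div_iff₀ hden (by norm_num)]; linarith
    have h11 : (M+1)*(-(1/(2*M+4))) = -((M+1)/(2*M+4)) := by ring
    rw [h11] at hb
    linarith
  have h1rq : (1-r)*(M+2) = 1/2 := by
    rw [hr_def]; field_simp; ring
  have hexpand : C*(r*a (m+1))*(Q*(r^m*W)*(1-r)*W)*(32*Real.exp 1*(M+2))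
      = (C*a (m+1)*Q)*((r^(m+1))*W*W*(16*Real.exp 1))*(2*((1-r)*(M+2))) := by
    rw [pow_succ]; ring
  have hrp : (0:ℝ) < r^(m+1) := pow_pos hr0 (m+1)
  have k0 : (49/100:ℝ) ≤ r^(m+1)*W := by
    have := mul_le_mul hrm1 hW99 (by norm_num) hrp.le
    linarith only [this]
  have k0b : (48/100:ℝ) ≤ r^(m+1)*W*W := by
    have h17 : (0:ℝ) ≤ r^(m+1)*W := mul_nonneg hrp.le hW0
    have := mul_le_mul k0 hW99 (by norm_num) h17
    linarith only [this]
  have k1 : (8:ℝ) ≤ r^(m+1)*W*W*(16*Real.exp 1) := by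
    have h18 : (0:ℝ) ≤ r^(m+1)*W*W := mul_nonneg (mul_nonneg hrp.le hW0) hW0
    have := mul_le_mul k0b (show (16*2.7:ℝ) ≤ 16*Real.exp 1 by linarith only [hE27])
      (by norm_num) h18
    linarith only [this]
  have hpos2 : (0:ℝ) < C * a (m+1) * Q := by positivity
  have hexp : 8*C*a (m+1)*Q
      ≤ C*(r*a (m+1))*(Q*(r^m*W)*(1-r)*W)*(32*Real.exp 1*(M+2)) := by
    rw [hexpand, h1rq]
    calc 8*C*a (m+1)*Q = (C*a (m+1)*Q) * 8 * (2*(1/2)) := by ring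
      _ ≤ (C*a (m+1)*Q) * (r^(m+1)*W*W*(16*Real.exp 1)) * (2*(1/2)) := by
          have h19 := mul_le_mul_of_nonneg_left k1 hpos2.le
          linarith only [h19]
  have hmono2 : C*(r*a (m+1))*(Q*(r^m*W)*(1-r)*W)*(32*Real.exp 1*(M+2))
      ≤ C*(r*a (m+1))*P*(32*Real.exp 1*(M+2)) := by
    have hc1 : (0:ℝ) ≤ C*(r*a (m+1)) := by positivity
    have hc2 : (0:ℝ) ≤ 32*Real.exp 1*(M+2) := by positivity
    exact mul_le_mul_of_nonneg_right (mul_le_mul_of_nonneg_left hP_lb hc1) hc2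
  linarith [hexp, hmono2]
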